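/- Let d ≥ 1 be an integer and q₀ a real number with 2 < q₀ ≤ 3. Then for all a, b ∈ ℝ^d: |a+b|^{q₀} − |a|^{q₀} − q₀·|a|^{q₀−2}·⟨a,b⟩ ≤ (q₀(q₀−1)/2)·(|a|^{q₀−2}·|b|² + |b|^{q₀}). -/

import Mathlib

open RealInnerProductSpace

lemma scalar_conc {α : ℝ} (hα0 : 0 < α) (hα1 : α ≤ 1) {t s : ℝ} (ht : 0 ≤ t) (hts : t ≤ s) :
    (s ^ α - t ^ α) * t ≤ α * s ^ α * (s - t) := by
  rcases eq_or_lt_of_le ht with rfl | h0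
  · simp only [mul_zero]
    have h : 0 ≤ s ^ α := Real.rpow_nonneg (le_trans ht hts) α
    rw [sub_zero]
    positivity
  · have hs : 0 < s := lt_of_lt_of_le h0 hts
    have e2 : (s / t) ^ α ≤ 1 + α * (s / t - 1) := by
      have := rpow_one_add_le_one_add_mul_self (s := s / t - 1)
        (by nlinarith [div_nonneg hs.le h0.le]) hα0.le hα1
      simpa using this
    have e1 : s ^ α = t ^ α * (s / t) ^ α := by
      rw [← Real.mul_rpow h0.le (div_nonneg hs.le h0.le)]
      rw [mul_div_cancel₀ _ h0.ne']
    have htα : (0:ℝ) ≤ t ^ α := Real.rpow_nonneg h0.le α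
    have h3 : s ^ α * t ≤ t ^ α * t + α * t ^ α * (s - t) := by
      calc s ^ α * t = t ^ α * (s / t) ^ α * t := by rw [e1]
        _ ≤ t ^ α * (1 + α * (s / t - 1)) * t :=
            mul_le_mul_of_nonneg_right (mul_le_mul_of_nonneg_left e2 htα) h0.le
        _ = t ^ α * t + α * t ^ α * ((s / t - 1) * t) := by ring
        _ = t ^ α * t + α * t ^ α * (s - t) := by
            congr 1
            congr 1
            field_simp
    have h4 : t ^ α ≤ s ^ α := Real.rpow_le_rpow h0.le hts hα0.le
    nlinarith [mul_nonneg (mul_nonneg hα0.le (sub_nonneg.mpr h4)) (sub_nonneg.mpr hts)]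

section InnerLemmas

variable {E : Type*} [NormedAddCommGroup E] [InnerProductSpace ℝ E]

lemma key' {α : ℝ} (hα0 : 0 < α) (hα1 : α ≤ 1) (x y b : E) (h : ‖y‖ ≤ ‖x‖) :
    ‖x‖ ^ α * ⟪x, b⟫ - ‖y‖ ^ α * ⟪y, b⟫ ≤ (1 + α) * ‖x‖ ^ α * (‖x - y‖ * ‖b‖) := by
  have hxα : (0:ℝ) ≤ ‖x‖ ^ α := Real.rpow_nonneg (norm_nonneg _) α
  have hd : ‖x‖ ^ α * ⟪x, b⟫ - ‖y‖ ^ α * ⟪y, b⟫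
      = ‖x‖ ^ α * ⟪x - y, b⟫ + (‖x‖ ^ α - ‖y‖ ^ α) * ⟪y, b⟫ := by
    rw [inner_sub_left]; ring
  have hb1 : ‖x‖ ^ α * ⟪x - y, b⟫ ≤ ‖x‖ ^ α * (‖x - y‖ * ‖b‖) :=
    mul_le_mul_of_nonneg_left (real_inner_le_norm _ _) hxα
  have hsub : ‖y‖ ^ α ≤ ‖x‖ ^ α := Real.rpow_le_rpow (norm_nonneg _) h hα0.le
  have hb2 : (‖x‖ ^ α - ‖y‖ ^ α) * ⟪y, b⟫ ≤ α * ‖x‖ ^ α * (‖x - y‖ * ‖b‖) := by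
    have h1 : (‖x‖ ^ α - ‖y‖ ^ α) * ⟪y, b⟫ ≤ (‖x‖ ^ α - ‖y‖ ^ α) * (‖y‖ * ‖b‖) :=
      mul_le_mul_of_nonneg_left (real_inner_le_norm _ _) (sub_nonneg.mpr hsub)
    have h2 : (‖x‖ ^ α - ‖y‖ ^ α) * ‖y‖ ≤ α * ‖x‖ ^ α * (‖x‖ - ‖y‖) :=
      scalar_conc hα0 hα1 (norm_nonneg _) h
    have h3 : ‖x‖ - ‖y‖ ≤ ‖x - y‖ := norm_sub_norm_le x y
    nlinarith [mul_le_mul_of_nonneg_right h2 (norm_nonneg b),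
      mul_le_mul_of_nonneg_left (mul_le_mul_of_nonneg_right h3 (norm_nonneg b))
        (mul_nonneg hα0.le hxα)]
  calc ‖x‖ ^ α * ⟪x, b⟫ - ‖y‖ ^ α * ⟪y, b⟫
      = ‖x‖ ^ α * ⟪x - y, b⟫ + (‖x‖ ^ α - ‖y‖ ^ α) * ⟪y, b⟫ := hd
    _ ≤ ‖x‖ ^ α * (‖x - y‖ * ‖b‖) + α * ‖x‖ ^ α * (‖x - y‖ * ‖b‖) := add_le_add hb1 hb2
    _ = (1 + α) * ‖x‖ ^ α * (‖x - y‖ * ‖b‖) := by ring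

lemma key {α : ℝ} (hα0 : 0 < α) (hα1 : α ≤ 1) (x y b : E) {M : ℝ} (hx : ‖x‖ ≤ M) (hy : ‖y‖ ≤ M) :
    ‖x‖ ^ α * ⟪x, b⟫ - ‖y‖ ^ α * ⟪y, b⟫ ≤ (1 + α) * M ^ α * (‖x - y‖ * ‖b‖) := by
  have hM : 0 ≤ M := le_trans (norm_nonneg x) hx
  have hmul : (0:ℝ) ≤ ‖x - y‖ * ‖b‖ := mul_nonneg (norm_nonneg _) (norm_nonneg _)
  rcases le_total ‖y‖ ‖x‖ with h | h
  · refine le_trans (key' hα0 hα1 x y b h) ?_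
    have : ‖x‖ ^ α ≤ M ^ α := Real.rpow_le_rpow (norm_nonneg _) hx hα0.le
    have h1α : (0:ℝ) ≤ 1 + α := by linarith
    exact mul_le_mul_of_nonneg_right (mul_le_mul_of_nonneg_left this h1α) hmul
  · have := key' hα0 hα1 y x (-b) h
    simp only [inner_neg_right, mul_neg, norm_neg] at this
    have h2 : ‖x‖ ^ α * ⟪x, b⟫ - ‖y‖ ^ α * ⟪y, b⟫ ≤ (1 + α) * ‖y‖ ^ α * (‖x - y‖ * ‖b‖) := by
      rw [norm_sub_rev] at this; linarith
    refine le_trans h2 ?_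
    have : ‖y‖ ^ α ≤ M ^ α := Real.rpow_le_rpow (norm_nonneg _) hy hα0.le
    have h1α : (0:ℝ) ≤ 1 + α := by linarith
    exact mul_le_mul_of_nonneg_right (mul_le_mul_of_nonneg_left this h1α) hmul

lemma deriv_norm_rpow {q₀ : ℝ} (hq₀ : 2 < q₀) (a b : E) (t : ℝ) :
    HasDerivAt (fun s : ℝ => ‖a + s • b‖ ^ q₀)
      (q₀ * ‖a + t • b‖ ^ (q₀ - 2) * ⟪a + t • b, b⟫) t := by
  have hx : ∀ s : ℝ, ‖a‖ ^ 2 + 2 * ⟪a, b⟫ * s + ‖b‖ ^ 2 * s ^ 2 = ‖a + s • b‖ ^ 2 := by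
    intro s
    rw [norm_add_sq_real, real_inner_smul_right, norm_smul, Real.norm_eq_abs, mul_pow, sq_abs]
    ring
  have hg : HasDerivAt (fun s : ℝ => ‖a‖ ^ 2 + 2 * ⟪a, b⟫ * s + ‖b‖ ^ 2 * s ^ 2)
      (2 * ⟪a + t • b, b⟫) t := by
    have h1 : HasDerivAt (fun s : ℝ => ‖a‖ ^ 2 + 2 * ⟪a, b⟫ * s + ‖b‖ ^ 2 * s ^ 2)
        (0 + 2 * ⟪a, b⟫ * 1 + ‖b‖ ^ 2 * (2 * t ^ 1)) t := by
      exact ((hasDerivAt_const t (‖a‖ ^ 2)).add (((hasDerivAt_id t).const_mul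
        (2 * ⟪a, b⟫)))).add ((hasDerivAt_pow 2 t).const_mul (‖b‖ ^ 2))
    convert h1 using 1
    rw [inner_add_left, real_inner_smul_left, real_inner_self_eq_norm_sq]
    ring
  have hp1 : (1:ℝ) ≤ q₀ / 2 := by linarith
  have hcomp := (Real.hasDerivAt_rpow_const (x := ‖a‖ ^ 2 + 2 * ⟪a, b⟫ * t + ‖b‖ ^ 2 * t ^ 2)
    (p := q₀ / 2) (Or.inr hp1)).comp t hg
  have hsq : ∀ (x : E) (r : ℝ), ((‖x‖ : ℝ) ^ 2) ^ r = ‖x‖ ^ (2 * r) := by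
    intro x r
    rw [← Real.rpow_natCast ‖x‖ 2, ← Real.rpow_mul (norm_nonneg _)]
    norm_num
  have heq : (fun s : ℝ => (‖a‖ ^ 2 + 2 * ⟪a, b⟫ * s + ‖b‖ ^ 2 * s ^ 2) ^ (q₀ / 2))
      = fun s : ℝ => ‖a + s • b‖ ^ q₀ := by
    funext s
    rw [hx s, hsq, show 2 * (q₀ / 2) = q₀ by ring]
  rw [Function.comp_def, heq] at hcomp
  refine hcomp.congr_deriv ?_
  rw [hx t, hsq]
  rw [show 2 * (q₀ / 2 - 1) = q₀ - 2 by ring]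
  ring

end InnerLemmas

open NNReal in
lemma rpow_add_le_my {p x y : ℝ} (hx : 0 ≤ x) (hy : 0 ≤ y) (hp0 : 0 ≤ p) (hp1 : p ≤ 1) :
    (x + y) ^ p ≤ x ^ p + y ^ p := by
  have h := NNReal.rpow_add_le_add_rpow (x.toNNReal) (y.toNNReal) hp0 hp1
  have hxy : ((x.toNNReal + y.toNNReal : ℝ≥0) : ℝ) = x + y := by
    simp [Real.coe_toNNReal _ hx, Real.coe_toNNReal _ hy]
  calc (x + y) ^ p = (((x.toNNReal + y.toNNReal : ℝ≥0) : ℝ)) ^ p := by rw [hxy]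
    _ = (((x.toNNReal + y.toNNReal) ^ p : ℝ≥0) : ℝ) := by rw [NNReal.coe_rpow]
    _ ≤ ((x.toNNReal ^ p + y.toNNReal ^ p : ℝ≥0) : ℝ) := by exact_mod_cast h
    _ = x ^ p + y ^ p := by
        push_cast [NNReal.coe_rpow, Real.coe_toNNReal _ hx, Real.coe_toNNReal _ hy]
        ring

/-- Inequality (eq:biprdt_mvt1) of the paper, case `2 < q₀ ≤ 3`. -/
theorem stmt_3 (d : ℕ) (hd : 1 ≤ d) (q₀ : ℝ) (hq₀ : 2 < q₀) (hq₀' : q₀ ≤ 3)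
    (a b : EuclideanSpace ℝ (Fin d)) :
    ‖a + b‖ ^ q₀ - ‖a‖ ^ q₀ - q₀ * ‖a‖ ^ (q₀ - 2) * ⟪a, b⟫ ≤
      q₀ * (q₀ - 1) / 2 * (‖a‖ ^ (q₀ - 2) * ‖b‖ ^ 2 + ‖b‖ ^ q₀) := by
  rcases eq_or_ne b 0 with rfl | hb
  · simp only [add_zero, inner_zero_right, mul_zero, norm_zero, sub_zero, sub_self]
    rw [Real.zero_rpow (by positivity : q₀ ≠ 0)]
    norm_num
  · have hb0 : 0 < ‖b‖ := norm_pos_iff.mpr hb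
    have hα0 : 0 < q₀ - 2 := by linarith
    have hα1 : q₀ - 2 ≤ 1 := by linarith
    have hq0 : (0:ℝ) < q₀ := by linarith
    set R := ‖a‖ + ‖b‖ with hR
    have hR0 : 0 < R := by positivity
    set L := q₀ * (q₀ - 1) * R ^ (q₀ - 2) * ‖b‖ ^ 2 with hL
    set c := q₀ * ‖a‖ ^ (q₀ - 2) * ⟪a, b⟫ with hc
    set h : ℝ → ℝ := fun t => ‖a + t • b‖ ^ q₀ - c * t - L / 2 * t ^ 2 with hh_def
    have hh : ∀ t : ℝ, HasDerivAt h
        (q₀ * ‖a + t • b‖ ^ (q₀ - 2) * ⟪a + t • b, b⟫ - c - L * t) t := by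
      intro t
      have h1 := ((deriv_norm_rpow hq₀ a b t).sub
        ((hasDerivAt_id t).const_mul c)).sub ((hasDerivAt_pow 2 t).const_mul (L / 2))
      refine h1.congr_deriv ?_
      norm_num
      ring
    have hder_le : ∀ t ∈ Set.Ioo (0:ℝ) 1,
        q₀ * ‖a + t • b‖ ^ (q₀ - 2) * ⟪a + t • b, b⟫ - c - L * t ≤ 0 := by
      intro t ht
      have ht0 : 0 ≤ t := ht.1.le
      have ht1 : t ≤ 1 := ht.2.le
      have hxR : ‖a + t • b‖ ≤ R := by
        refine le_trans (norm_add_le _ _) ?_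
        rw [norm_smul, Real.norm_eq_abs, abs_of_nonneg ht0]
        have : t * ‖b‖ ≤ ‖b‖ := by nlinarith
        linarith [le_refl ‖a‖]
      have haR : ‖a‖ ≤ R := le_add_of_nonneg_right (norm_nonneg b)
      have hk := key hα0 hα1 (a + t • b) a b hxR haR
      rw [add_sub_cancel_left, norm_smul, Real.norm_eq_abs, abs_of_nonneg ht0] at hk
      have hRα : (0:ℝ) ≤ R ^ (q₀ - 2) := Real.rpow_nonneg hR0.le _
      nlinarith [mul_le_mul_of_nonneg_left hk hq0.le]
    have hcont : ContinuousOn h (Set.Icc 0 1) :=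
      fun t _ => (hh t).continuousAt.continuousWithinAt
    have hdiff : DifferentiableOn ℝ h (interior (Set.Icc (0:ℝ) 1)) :=
      fun t _ => (hh t).differentiableAt.differentiableWithinAt
    have hanti : AntitoneOn h (Set.Icc 0 1) := by
      apply antitoneOn_of_deriv_nonpos (convex_Icc 0 1) hcont hdiff
      intro t ht
      rw [interior_Icc] at ht
      rw [(hh t).deriv]
      exact hder_le t ht
    have h10 : h 1 ≤ h 0 :=
      hanti (Set.left_mem_Icc.mpr zero_le_one) (Set.right_mem_Icc.mpr zero_le_one) zero_le_one
    simp only [hh_def, one_smul, zero_smul, add_zero, one_pow, mul_one, mul_zero, sub_zero] at h10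
    -- h10 : ‖a + b‖ ^ q₀ - c - L / 2 ≤ ‖a‖ ^ q₀
    have hsub : R ^ (q₀ - 2) ≤ ‖a‖ ^ (q₀ - 2) + ‖b‖ ^ (q₀ - 2) :=
      rpow_add_le_my (norm_nonneg a) (norm_nonneg b) hα0.le hα1
    have hbq : ‖b‖ ^ (q₀ - 2) * ‖b‖ ^ 2 = ‖b‖ ^ q₀ := by
      rw [show ((‖b‖:ℝ) ^ 2) = ‖b‖ ^ ((2:ℕ):ℝ) from (Real.rpow_natCast _ 2).symm,
        ← Real.rpow_add hb0]
      norm_num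
    have hq1 : (0:ℝ) < q₀ - 1 := by linarith
    have h10' : ‖a + b‖ ^ q₀ - c - L / 2 ≤ ‖a‖ ^ q₀ := by
      simpa using h10
    have h6 : R ^ (q₀ - 2) * ‖b‖ ^ 2 ≤ ‖a‖ ^ (q₀ - 2) * ‖b‖ ^ 2 + ‖b‖ ^ q₀ := by
      rw [← hbq]
      nlinarith [mul_le_mul_of_nonneg_right hsub (sq_nonneg ‖b‖)]
    have h5 : L / 2 ≤ q₀ * (q₀ - 1) / 2 * (‖a‖ ^ (q₀ - 2) * ‖b‖ ^ 2 + ‖b‖ ^ q₀) := by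
      have hpos : (0:ℝ) ≤ q₀ * (q₀ - 1) / 2 := by nlinarith
      calc L / 2 = q₀ * (q₀ - 1) / 2 * (R ^ (q₀ - 2) * ‖b‖ ^ 2) := by rw [hL]; ring
        _ ≤ _ := mul_le_mul_of_nonneg_left h6 hpos
    linarith
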